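/- Define f : ℕ → ℝ by f(1) = e and f(a+1) = f(a) + 1 + 1/(2·f(a)) + 0.6/(2·f(a)^2) for a ≥ 1. Then for every natural number a ≥ 2, f(a) ≤ a + 0.5·ln a + 1.65. -/

import Mathlib

lemma log_ge_one_sub_inv {y : ℝ} (hy : 0 < y) : 1 - 1/y ≤ Real.log y := by
  have h := Real.log_le_sub_one_of_pos (show (0:ℝ) < 1/y by positivity)
  rw [Real.log_div one_ne_zero (ne_of_gt hy), Real.log_one] at h
  linarith

theorem stmt_0 (f : ℕ → ℝ) (h1 : f 1 = Real.exp 1)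
    (hrec : ∀ a : ℕ, 1 ≤ a →
      f (a + 1) = f a + 1 + 1 / (2 * f a) + 0.6 / (2 * (f a) ^ 2)) :
    ∀ a : ℕ, 2 ≤ a → f a ≤ (a : ℝ) + 0.5 * Real.log a + 1.65 := by
  have hlow : ∀ a : ℕ, 1 ≤ a → (a : ℝ) + 1.5 ≤ f a := by
    intro a ha
    induction a, ha using Nat.le_induction with
    | base =>
      rw [h1]
      have := Real.exp_one_gt_d9
      norm_num at this ⊢
      linarith
    | succ n hn ih =>
      have hfn : (0:ℝ) < f n := by
        have : (0:ℝ) < (n:ℝ) + 1.5 := by positivity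
        linarith
      rw [hrec n hn]
      have hp1 : (0:ℝ) ≤ 1/(2*f n) := by positivity
      have hp2 : (0:ℝ) ≤ 0.6/(2*(f n)^2) := by positivity
      push_cast
      linarith
  intro a ha
  induction a, ha using Nat.le_induction with
  | base =>
    have hf2 : f 2 = Real.exp 1 + 1 + 1/(2*Real.exp 1) + 0.6/(2*(Real.exp 1)^2) := by
      have h := hrec 1 le_rfl
      rw [h1] at h
      exact h
    rw [hf2]
    have he1 := Real.exp_one_gt_d9
    have he2 := Real.exp_one_lt_d9
    have hl2 := Real.log_two_gt_d9
    have hepos : (0:ℝ) < Real.exp 1 := Real.exp_pos 1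
    have hb1 : 1/(2*Real.exp 1) ≤ 1/(2*2.7182818283) := by
      apply one_div_le_one_div_of_le (by norm_num) (by linarith)
    have hb2 : 0.6/(2*(Real.exp 1)^2) ≤ 0.6/(2*(2.7182818283:ℝ)^2) := by
      apply div_le_div_of_nonneg_left (by norm_num) (by norm_num)
      nlinarith
    norm_num at hb1 hb2 ⊢
    nlinarith
  | succ n hn ih =>
    have hx : (2:ℝ) ≤ (n:ℝ) := by exact_mod_cast hn
    set x : ℝ := (n:ℝ) with hxdef
    have hfl : x + 1.5 ≤ f n := hlow n (by omega)
    have hfpos : (0:ℝ) < f n := by linarith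
    have hxpos : (0:ℝ) < x := by linarith
    rw [hrec n (by omega)]
    have hb1 : 1/(2*f n) ≤ 1/(2*x+3) := by
      apply one_div_le_one_div_of_le (by linarith) (by linarith)
    have hb2 : 0.6/(2*(f n)^2) ≤ 0.6/(2*(x+1.5)^2) := by
      apply div_le_div_of_nonneg_left (by norm_num) (by positivity)
      nlinarith
    -- log bound : log(x+1) - log x ≥ 1/(2x+2) + 1/(2x+1)
    have hlog : 1/(2*x+2) + 1/(2*x+1) ≤ Real.log (x+1) - Real.log x := by
      have e1 : Real.log (x+1) - Real.log x
          = Real.log ((2*x+2)/(2*x+1)) + Real.log ((2*x+1)/(2*x)) := by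
        rw [Real.log_div (by linarith) (by linarith), Real.log_div (by linarith) (by linarith)]
        have l1 : Real.log (2*x+2) = Real.log 2 + Real.log (x+1) := by
          rw [← Real.log_mul (by norm_num) (by linarith)]; ring_nf
        have l2 : Real.log (2*x) = Real.log 2 + Real.log x := by
          rw [← Real.log_mul (by norm_num) (by linarith)]
        linarith
      have g1 := log_ge_one_sub_inv (show (0:ℝ) < (2*x+2)/(2*x+1) by positivity)
      have g2 := log_ge_one_sub_inv (show (0:ℝ) < (2*x+1)/(2*x) by positivity)
      have q1 : 1 - 1/((2*x+2)/(2*x+1)) = 1/(2*x+2) := by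
        rw [one_div_div]
        field_simp
        ring
      have q2 : 1 - 1/((2*x+1)/(2*x)) = 1/(2*x+1) := by
        rw [one_div_div]
        field_simp
        ring
      rw [q1] at g1
      rw [q2] at g2
      linarith
    -- polynomial inequality
    have hpoly : 1/(2*x+3) + 0.6/(2*(x+1.5)^2) ≤ 0.5*(1/(2*x+2)) + 0.5*(1/(2*x+1)) := by
      have h3 : (0:ℝ) < 2*x+3 := by linarith
      have h2 : (0:ℝ) < 2*x+2 := by linarith
      have h1' : (0:ℝ) < 2*x+1 := by linarith
      have h15 : (0:ℝ) < 2*(x+1.5)^2 := by positivity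
      rw [div_add_div _ _ (ne_of_gt h3) (ne_of_gt h15),
        show (0.5:ℝ)*(1/(2*x+2)) + 0.5*(1/(2*x+1)) = (2*x+1.5)/((2*x+2)*(2*x+1)) from by
          field_simp; ring,
        div_le_div_iff₀ (by positivity) (by positivity)]
      nlinarith [sq_nonneg x, sq_nonneg (x-2), mul_pos hxpos hxpos, mul_pos (mul_pos hxpos hxpos) hxpos]
    have hcast : ((n:ℕ)+1 : ℕ) = (x + 1 : ℝ) := by push_cast; ring
    push_cast
    have h05 : (0.5:ℝ) * Real.log (x+1) = 0.5 * Real.log x + 0.5 * (Real.log (x+1) - Real.log x) := by ring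
    simp only [← hxdef]
    linarith [hlog, ih, hb1, hb2, hpoly]
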